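/- The operators U₁(θ) form a π-periodic one-parameter unitary group: for all θ, θ' ∈ ℝ, U₁(θ) is a unitary operator on H, U₁(0) = 1, U₁(θ) ∘ U₁(θ') = U₁(θ + θ'), and U₁(θ + π) = U₁(θ). -/

import Mathlib

open Complex

noncomputable section

/-- The Hilbert space `H := ℓ²(ℤ, ℂ)`. -/
abbrev H : Type := lp (fun _ : ℤ => ℂ) 2

/-- The orthonormal basis vectors `e ℓ = lp.single 2 ℓ 1`. -/
def e (ℓ : ℤ) : H := lp.single 2 ℓ 1

/-- `U₁(θ) := exp(−iθ/2) • (cos(θ/2) • U(θ) + (i·sin(θ/2)) • U(θ+π))`. -/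
def U₁ (U : ℝ → (H →L[ℂ] H)) (θ : ℝ) : H →L[ℂ] H :=
  Complex.exp (-Complex.I * θ / 2) •
    ((Real.cos (θ / 2) : ℂ) • U θ + (Complex.I * Real.sin (θ / 2)) • U (θ + Real.pi))

lemma vec_ext {x y : H} (h : ∀ m : ℤ, (x : ∀ _ : ℤ, ℂ) m = y m) : x = y :=
  lp.ext (funext h)

lemma inner_e_left (m : ℤ) (x : H) : @inner ℂ H _ (e m) x = x m := by
  simp [e, lp.inner_single_left]

lemma e_apply (ℓ m : ℤ) : (e ℓ : ∀ _ : ℤ, ℂ) m = if m = ℓ then 1 else 0 := by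
  simp [e, lp.single_apply, Pi.single_apply]

lemma clm_ext {f g : H →L[ℂ] H} (h : ∀ ℓ : ℤ, f (e ℓ) = g (e ℓ)) : f = g := by
  set b : HilbertBasis ℤ ℂ H := default with hbdef
  have hb : ∀ i : ℤ, b i = e i := fun i => by
    rw [hbdef, ← HilbertBasis.repr_symm_single]
    rfl
  have hd : Dense (Submodule.span ℂ (Set.range e) : Set H) := by
    rw [Submodule.dense_iff_topologicalClosure_eq_top]
    have h2 : Set.range ⇑b = Set.range e := by rw [funext hb]
    rw [← h2]
    exact b.dense_span
  exact ContinuousLinearMap.ext_on hd (by rintro x ⟨ℓ, rfl⟩; exact h ℓ)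

def cc (θ : ℝ) (ℓ : ℤ) : ℂ :=
  Complex.exp (-Complex.I * θ / 2) *
    ((Real.cos (θ / 2) : ℂ) * Complex.exp (Complex.I * ℓ * θ)
      + (Complex.I * Real.sin (θ / 2)) * Complex.exp (Complex.I * ℓ * (θ + Real.pi)))

lemma cc_eq (θ : ℝ) (ℓ : ℤ) :
    cc θ ℓ = Complex.exp (Complex.I * ((2 * (ℓ / 2) : ℤ) : ℂ) * θ) := by
  have hexp : Complex.exp (Complex.I * ℓ * ((θ : ℂ) + (Real.pi : ℂ)))
      = Complex.exp (Complex.I * ℓ * θ) * Complex.exp (Complex.I * ℓ * Real.pi) := by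
    rw [← Complex.exp_add]; push_cast; ring_nf
  have hcs : (Real.cos (θ / 2) : ℂ) + (Real.sin (θ / 2) : ℂ) * Complex.I
      = Complex.exp (((θ / 2 : ℝ) : ℂ) * Complex.I) := by
    rw [Complex.ofReal_cos, Complex.ofReal_sin, Complex.cos_add_sin_I]
  have hcs' : (Real.cos (θ / 2) : ℂ) - (Real.sin (θ / 2) : ℂ) * Complex.I
      = Complex.exp (-(((θ / 2 : ℝ) : ℂ) * Complex.I)) := by
    have := Complex.cos_add_sin_I (-(((θ / 2 : ℝ) : ℂ)))
    rw [Complex.cos_neg, Complex.sin_neg] at this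
    rw [Complex.ofReal_cos, Complex.ofReal_sin, neg_mul_eq_neg_mul, ← this]; ring
  rcases Int.even_or_odd ℓ with ⟨k, hk⟩ | ⟨k, hk⟩
  · have hn : (2 * (ℓ / 2) : ℤ) = ℓ := by omega
    have hP : Complex.exp (Complex.I * ℓ * (Real.pi : ℂ)) = 1 := by
      have h2 : Complex.I * ℓ * (Real.pi : ℂ) = (k : ℂ) * (2 * Real.pi * Complex.I) := by
        push_cast [hk]; ring
      rw [h2]
      exact_mod_cast Complex.exp_int_mul_two_pi_mul_I k
    rw [hn]
    unfold cc
    rw [hexp, hP, mul_one,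
      show (Real.cos (θ / 2) : ℂ) * Complex.exp (Complex.I * (ℓ : ℂ) * (θ : ℂ)) +
        Complex.I * (Real.sin (θ / 2) : ℂ) * Complex.exp (Complex.I * (ℓ : ℂ) * (θ : ℂ))
        = Complex.exp (Complex.I * (ℓ : ℂ) * (θ : ℂ)) *
          ((Real.cos (θ / 2) : ℂ) + (Real.sin (θ / 2) : ℂ) * Complex.I) from by ring,
      hcs, ← Complex.exp_add, ← Complex.exp_add]
    congr 1
    push_cast; ring
  · have hn : (2 * (ℓ / 2) : ℤ) = ℓ - 1 := by omega
    have hP : Complex.exp (Complex.I * ℓ * (Real.pi : ℂ)) = -1 := by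
      have h2 : Complex.I * ℓ * (Real.pi : ℂ)
          = (Real.pi : ℂ) * Complex.I + (k : ℂ) * (2 * Real.pi * Complex.I) := by
        push_cast [hk]; ring
      rw [h2, Complex.exp_add, Complex.exp_pi_mul_I]
      rw [show ((k : ℂ) * (2 * Real.pi * Complex.I)) = ((k : ℤ) : ℂ) * (2 * Real.pi * Complex.I) by push_cast; ring,
        Complex.exp_int_mul_two_pi_mul_I]
      ring
    unfold cc
    rw [hexp, hP]
    have : (Real.cos (θ / 2) : ℂ) * Complex.exp (Complex.I * ↑ℓ * ↑θ) +
        Complex.I * (Real.sin (θ / 2) : ℂ) * (Complex.exp (Complex.I * ↑ℓ * ↑θ) * -1)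
        = Complex.exp (Complex.I * ↑ℓ * ↑θ) *
          ((Real.cos (θ / 2) : ℂ) - (Real.sin (θ / 2) : ℂ) * Complex.I) := by ring
    rw [this, hcs', ← Complex.exp_add, ← Complex.exp_add]
    congr 1
    push_cast [hn]; ring

/-- **`U₁` is a π-periodic one-parameter unitary group:** each `U₁(θ)` is unitary,
`U₁(0) = 1`, `U₁(θ) ∘ U₁(θ') = U₁(θ + θ')`, and `U₁(θ + π) = U₁(θ)`. -/
theorem U₁_one_parameter_unitary_group
    (U : ℝ → (H →L[ℂ] H)) (V : unitary (H →L[ℂ] H))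
    (hU : ∀ (θ : ℝ) (ℓ : ℤ), U θ (e ℓ) = Complex.exp (Complex.I * ℓ * θ) • e ℓ)
    (hV : ∀ ℓ : ℤ, (V : H →L[ℂ] H) (e ℓ) = e (ℓ + 1)) :
    ∀ θ θ' : ℝ,
      U₁ U θ ∈ unitary (H →L[ℂ] H) ∧
      U₁ U 0 = 1 ∧
      U₁ U θ ∘L U₁ U θ' = U₁ U (θ + θ') ∧
      U₁ U (θ + Real.pi) = U₁ U θ := by
  -- action of U₁ on basis vectors
  have hU₁ : ∀ (θ : ℝ) (ℓ : ℤ),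
      U₁ U θ (e ℓ) = Complex.exp (Complex.I * ((2 * (ℓ / 2) : ℤ) : ℂ) * θ) • e ℓ := by
    intro θ ℓ
    rw [← cc_eq]
    simp only [U₁, ContinuousLinearMap.smul_apply, ContinuousLinearMap.add_apply, hU,
      smul_smul, ← add_smul]
    congr 1
    simp only [cc]
    push_cast
    ring
  -- group law
  have hmul : ∀ θ θ' : ℝ, U₁ U θ ∘L U₁ U θ' = U₁ U (θ + θ') := by
    intro θ θ'
    refine clm_ext fun ℓ => ?_
    simp only [ContinuousLinearMap.comp_apply, hU₁, map_smul, smul_smul, ← Complex.exp_add]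
    congr 2
    push_cast; ring
  -- identity
  have hzero : U₁ U 0 = 1 := by
    refine clm_ext fun ℓ => ?_
    simp [hU₁]
  -- periodicity
  have hper : ∀ θ : ℝ, U₁ U (θ + Real.pi) = U₁ U θ := by
    intro θ
    refine clm_ext fun ℓ => ?_
    rw [hU₁, hU₁]
    congr 1
    rw [Complex.ofReal_add, mul_add, Complex.exp_add]
    have h1 : Complex.exp (Complex.I * ((2 * (ℓ / 2) : ℤ) : ℂ) * (Real.pi : ℂ)) = 1 := by
      have h2 : Complex.I * ((2 * (ℓ / 2) : ℤ) : ℂ) * (Real.pi : ℂ)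
          = ((ℓ / 2 : ℤ) : ℂ) * (2 * (Real.pi : ℂ) * Complex.I) := by push_cast; ring
      rw [h2]
      exact_mod_cast Complex.exp_int_mul_two_pi_mul_I (ℓ / 2)
    rw [h1, mul_one]
  -- adjoint
  have hstar : ∀ θ : ℝ, star (U₁ U θ) = U₁ U (-θ) := by
    intro θ
    refine clm_ext fun ℓ => vec_ext fun m => ?_
    have h1 : ((star (U₁ U θ)) (e ℓ) : ∀ _ : ℤ, ℂ) m
        = @inner ℂ H _ (U₁ U θ (e m)) (e ℓ) := by
      rw [← inner_e_left m, ContinuousLinearMap.star_eq_adjoint,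
        ContinuousLinearMap.adjoint_inner_right]
    rw [h1, hU₁, hU₁, inner_smul_left, inner_e_left, lp.coeFn_smul, Pi.smul_apply,
      smul_eq_mul]
    by_cases h : m = ℓ
    · subst h
      congr 1
      rw [← Complex.exp_conj]
      congr 1
      simp only [map_mul, Complex.conj_I, Complex.conj_ofReal, map_intCast]
      push_cast
      ring
    · simp [e_apply, h]
  -- conclusion
  intro θ θ'
  refine ⟨?_, hzero, hmul θ θ', hper θ⟩
  rw [Unitary.mem_iff]
  constructor
  · rw [hstar]
    calc U₁ U (-θ) * U₁ U θ = U₁ U (-θ + θ) := hmul (-θ) θ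
      _ = 1 := by rw [neg_add_cancel]; exact hzero
  · rw [hstar]
    calc U₁ U θ * U₁ U (-θ) = U₁ U (θ + -θ) := hmul θ (-θ)
      _ = 1 := by rw [add_neg_cancel]; exact hzero
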